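/- Let O be the ring of integers of a number field K, G a finite group, and u ∈ OG a normalized torsion unit of order n ≠ 1. Then the coefficient of u at the identity element is 0 (Berman–Higman for G-adapted coefficient rings). -/

import Mathlib

open Polynomial NumberField

noncomputable section BHsec



lemma BH.multiset_eq_one {S : Multiset ℝ} (hle : ∀ x ∈ S, x ≤ 1)
    (hsum : S.sum = S.card) : ∀ x ∈ S, x = 1 := by
  by_contra hc
  push_neg at hc
  obtain ⟨x, hxS, hx1⟩ := hc
  have hxlt : x < 1 := lt_of_le_of_ne (hle x hxS) hx1
  have h1 : S = x ::ₘ S.erase x := (Multiset.cons_erase hxS).symm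
  have h2 : (S.erase x).sum ≤ (S.erase x).card • (1:ℝ) :=
    Multiset.sum_le_card_nsmul _ _ (fun y hy => hle y (Multiset.mem_of_mem_erase hy))
  have hcard : (S.erase x).card = S.card - 1 := Multiset.card_erase_of_mem hxS
  have hpos : 1 ≤ S.card := Multiset.card_pos_iff_exists_mem.mpr ⟨x, hxS⟩
  have e1 : S.sum = x + (S.erase x).sum := by
    conv_lhs => rw [h1]
    rw [Multiset.sum_cons]
  rw [hcard, nsmul_eq_mul, mul_one] at h2
  have hcast : ((S.card - 1 : ℕ) : ℝ) = (S.card : ℝ) - 1 := by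
    push_cast [Nat.cast_sub hpos]; ring
  rw [hcast] at h2
  rw [e1] at hsum
  linarith

lemma BH.re_eq_one {z : ℂ} (hnorm : ‖z‖ = 1) (hre : z.re = 1) : z = 1 := by
  have h2 : Complex.normSq z = 1 := by
    rw [Complex.normSq_eq_norm_sq, hnorm]; norm_num
  have : z.im = 0 := by
    rw [Complex.normSq_apply, hre] at h2; nlinarith
  exact Complex.ext (by simp [hre]) (by simp [this])

lemma BH.monic_eq_pow {p : ℂ[X]} (hp : p.Monic) {c : ℂ}
    (h : ∀ t ∈ p.roots, t = c) : p = (X - C c) ^ p.natDegree := by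
  have hs : p.Splits := IsAlgClosed.splits p
  have hcard : p.roots.card = p.natDegree := (splits_iff_card_roots).mp hs
  have hrep : p.roots = Multiset.replicate p.natDegree c :=
    Multiset.eq_replicate.mpr ⟨by rw [hcard], h⟩
  conv_lhs => rw [hs.eq_prod_roots_of_monic hp]
  rw [hrep, Multiset.map_replicate, Multiset.prod_replicate]


abbrev BH.b (G : Type*) [Group G] : Module.Basis G ℂ (MonoidAlgebra ℂ G) := MonoidAlgebra.basis G ℂ

variable {G : Type*} [Group G] [Fintype G] [DecidableEq G]

lemma BH.trace_mulLeft (v : MonoidAlgebra ℂ G) :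
    Matrix.trace (LinearMap.toMatrix (BH.b G) (BH.b G)
      (LinearMap.mulLeft ℂ v)) = (Fintype.card G : ℂ) * v.coeff 1 := by
  rw [Matrix.trace]
  have h : ∀ g : G, Matrix.diag (LinearMap.toMatrix (BH.b G) (BH.b G)
      (LinearMap.mulLeft ℂ v)) g = v.coeff 1 := by
    intro g
    simp only [Matrix.diag, LinearMap.toMatrix_apply, LinearMap.mulLeft_apply]
    show (v * MonoidAlgebra.single g 1 : MonoidAlgebra ℂ G).coeff g = v.coeff 1
    rw [MonoidAlgebra.coeff_mul_single_apply]
    simp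
  rw [Finset.sum_congr rfl (fun g _ => h g), Finset.sum_const, nsmul_eq_mul, Finset.card_univ]

lemma BH.eval_charpoly' {H : Type*} [Fintype H] [DecidableEq H] (M : Matrix H H ℂ) (t : ℂ) :
    M.charpoly.eval t = (algebraMap ℂ (Matrix H H ℂ) t - M).det := by
  rw [Matrix.charpoly, ← Polynomial.coe_evalRingHom, RingHom.map_det]
  congr 1
  ext i j
  by_cases h : i = j
  · subst h; simp [Matrix.charmatrix_apply_eq, Matrix.algebraMap_eq_diagonal]
  · simp [Matrix.charmatrix_apply_ne _ _ _ h, Matrix.algebraMap_eq_diagonal,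
      Matrix.diagonal_apply_ne _ h]

lemma BH.root_pow_eq_one {H : Type*} [Fintype H] [DecidableEq H] [Nonempty H]
    {M : Matrix H H ℂ} {n : ℕ} (hM : M ^ n = 1)
    {t : ℂ} (ht : t ∈ M.charpoly.roots) : t ^ n = 1 := by
  have hroot : M.charpoly.IsRoot t := (Polynomial.mem_roots (M.charpoly_monic.ne_zero)).mp ht
  have hspec : t ∈ spectrum ℂ M := by
    rw [spectrum.mem_iff]
    intro hU
    have hdet := (Matrix.isUnit_iff_isUnit_det _).mp hU
    rw [Polynomial.IsRoot, BH.eval_charpoly'] at hroot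
    simp [hroot] at hdet
  have h2 := spectrum.subset_polynomial_aeval M (X ^ n : ℂ[X]) ⟨t, hspec, rfl⟩
  rw [map_pow, aeval_X, hM] at h2
  simp only [eval_pow, eval_X] at h2
  rw [spectrum.mem_iff] at h2
  by_contra hne
  refine h2 ?_
  have heq : algebraMap ℂ (Matrix H H ℂ) (t ^ n) - 1 = algebraMap ℂ _ (t ^ n - 1) := by
    rw [map_sub, map_one]
  rw [heq]
  exact IsUnit.map _ (Ne.isUnit (sub_ne_zero.mpr hne))

lemma BH.keyA (v : MonoidAlgebra ℂ G) {n : ℕ} (hn : n ≠ 0) (hv : v ^ n = 1) :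
    ‖v.coeff 1‖ ≤ 1 ∧ (‖v.coeff 1‖ = 1 → ∀ g : G, g ≠ 1 → v.coeff g = 0) := by
  have hne : Nonempty G := ⟨1⟩
  set E := LinearMap.toMatrixAlgEquiv (BH.b G) with hE
  set f := LinearMap.mulLeft ℂ v with hf
  set M := E f with hM
  have hflmul : f = Algebra.lmul ℂ (MonoidAlgebra ℂ G) v := rfl
  have hMn : M ^ n = 1 := by
    rw [hM, ← map_pow, hflmul, ← map_pow, hv, map_one, map_one]
  have htr : Matrix.trace M = (Fintype.card G : ℂ) * v.coeff 1 := BH.trace_mulLeft v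
  have htr2 : Matrix.trace M = M.charpoly.roots.sum := Matrix.trace_eq_sum_roots_charpoly M
  have hcard : M.charpoly.roots.card = Fintype.card G := by
    rw [(splits_iff_card_roots).mp (IsAlgClosed.splits M.charpoly),
      Matrix.charpoly_natDegree_eq_dim]
  have hnorm1 : ∀ t ∈ M.charpoly.roots, ‖t‖ = 1 := fun t ht =>
    Complex.norm_eq_one_of_pow_eq_one (BH.root_pow_eq_one hMn ht) hn
  have hcpos : (0:ℝ) < Fintype.card G := by positivity
  -- the bound
  have hbound : ‖v.coeff 1‖ ≤ 1 := by
    have h1 : ‖M.charpoly.roots.sum‖ ≤ (M.charpoly.roots.map (fun t => ‖t‖)).sum :=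
      norm_multiset_sum_le _
    have h2 : (M.charpoly.roots.map (fun t => ‖t‖)) =
        Multiset.replicate (Fintype.card G) (1:ℝ) := by
      refine Multiset.eq_replicate.mpr ⟨by simp [hcard], ?_⟩
      intro x hx
      obtain ⟨t, ht, rfl⟩ := Multiset.mem_map.mp hx
      exact hnorm1 t ht
    rw [h2, Multiset.sum_replicate, nsmul_eq_mul, mul_one] at h1
    rw [← htr2, htr] at h1
    rw [norm_mul, Complex.norm_natCast] at h1
    calc ‖v.coeff 1‖ = ((Fintype.card G : ℝ) * ‖v.coeff 1‖) / (Fintype.card G) := by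
          field_simp
      _ ≤ (Fintype.card G : ℝ) / (Fintype.card G) := by
          exact div_le_div_of_nonneg_right h1 hcpos.le
      _ = 1 := by field_simp
  refine ⟨hbound, ?_⟩
  intro h1 g hg
  set c := v.coeff 1 with hc
  have hallc : ∀ t ∈ M.charpoly.roots, t = c := by
    have hRsum : M.charpoly.roots.sum = (Fintype.card G : ℂ) * c := by rw [← htr2, htr]
    set S : Multiset ℝ := M.charpoly.roots.map (fun t => ((starRingEnd ℂ) c * t).re) with hS
    have hnormc : ∀ t ∈ M.charpoly.roots, ‖(starRingEnd ℂ) c * t‖ = 1 := by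
      intro t ht
      rw [norm_mul, RCLike.norm_conj, h1, hnorm1 t ht, one_mul]
    have hSle : ∀ x ∈ S, x ≤ 1 := by
      intro x hx
      obtain ⟨t, ht, rfl⟩ := Multiset.mem_map.mp hx
      calc ((starRingEnd ℂ) c * t).re ≤ ‖(starRingEnd ℂ) c * t‖ :=
            Complex.re_le_norm _
        _ = 1 := by exact hnormc t ht
    have hScard : Multiset.card S = Fintype.card G := by rw [hS, Multiset.card_map, hcard]
    have hSsum : S.sum = Multiset.card S := by
      have e1 : (M.charpoly.roots.map (fun t => (starRingEnd ℂ) c * t)).sum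
          = (starRingEnd ℂ) c * M.charpoly.roots.sum := by
        have := Multiset.sum_map_mul_left (s := M.charpoly.roots)
          (a := (starRingEnd ℂ) c) (f := fun t => t)
        simpa using this
      have e2 : S.sum = ((starRingEnd ℂ) c * M.charpoly.roots.sum).re := by
        rw [hS, ← e1]
        have := map_multiset_sum Complex.reAddGroupHom
          (M.charpoly.roots.map (fun t => (starRingEnd ℂ) c * t))
        simpa [Multiset.map_map, Function.comp] using this.symm
      have hnsq : (starRingEnd ℂ) c * c = 1 := by
        rw [mul_comm, Complex.mul_conj]
        norm_cast
        rw [Complex.normSq_eq_norm_sq, h1, one_pow]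
      rw [e2, hRsum, mul_comm ((Fintype.card G : ℂ)) c, ← mul_assoc, mul_comm ((starRingEnd ℂ) c) c]
      rw [mul_comm c ((starRingEnd ℂ) c), hnsq, one_mul, hScard]
      simp
    have hall := BH.multiset_eq_one hSle hSsum
    intro t ht
    have hre : ((starRingEnd ℂ) c * t).re = 1 :=
      hall _ (Multiset.mem_map_of_mem _ ht)
    have heq1 : (starRingEnd ℂ) c * t = 1 := BH.re_eq_one (hnormc t ht) hre
    have hnsq : c * (starRingEnd ℂ) c = 1 := by
      rw [Complex.mul_conj]
      norm_cast
      rw [Complex.normSq_eq_norm_sq, h1, one_pow]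
    calc t = (c * (starRingEnd ℂ) c) * t := by rw [hnsq, one_mul]
      _ = c * ((starRingEnd ℂ) c * t) := by ring
      _ = c := by rw [heq1, mul_one]
  have hcp : M.charpoly = (X - C c) ^ (Fintype.card G) := by
    have h := BH.monic_eq_pow M.charpoly_monic hallc
    rwa [Matrix.charpoly_natDegree_eq_dim] at h
  have hint : IsIntegral ℂ M :=
    ⟨M.charpoly, M.charpoly_monic, by rw [← Polynomial.aeval_def]; exact M.aeval_self_charpoly⟩
  set m := minpoly ℂ M with hmdef
  have hmdvd1 : m ∣ (X - C c) ^ (Fintype.card G) := hcp ▸ minpoly.dvd ℂ M M.aeval_self_charpoly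
  have hmdvd2 : m ∣ X ^ n - 1 :=
    minpoly.dvd ℂ M (by rw [map_sub, map_pow, aeval_X, map_one, hMn, sub_self])
  have hsep : (X ^ n - 1 : ℂ[X]).Separable := by
    simpa using Polynomial.separable_X_pow_sub_C (1:ℂ) (Nat.cast_ne_zero.mpr hn) one_ne_zero
  have hmsep : m.Separable := hsep.of_dvd hmdvd2
  have hmsf : Squarefree m := hmsep.squarefree
  have hmmonic : m.Monic := minpoly.monic hint
  have hmroots : ∀ t ∈ m.roots, t = c := by
    intro t ht
    have hroot : m.IsRoot t := (mem_roots hmmonic.ne_zero).mp ht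
    obtain ⟨q, hq⟩ := hmdvd1
    have h0 : eval t ((X - C c) ^ Fintype.card G) = 0 := by
      rw [hq, eval_mul, hroot.eq_zero, zero_mul]
    rw [eval_pow, eval_sub, eval_X, eval_C] at h0
    have := pow_eq_zero_iff (Fintype.card_ne_zero) |>.mp h0
    exact sub_eq_zero.mp this
  have hmdeg : m.natDegree = 1 := by
    have hpos : 0 < m.natDegree := minpoly.natDegree_pos hint
    by_contra hne1
    have h2le : 2 ≤ m.natDegree := by omega
    have hm2 : m = (X - C c) ^ m.natDegree := BH.monic_eq_pow hmmonic hmroots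
    have hdvd : (X - C c) * (X - C c) ∣ m := by
      rw [hm2, ← sq]
      exact pow_dvd_pow _ h2le
    exact (Polynomial.not_isUnit_X_sub_C c) (hmsf _ hdvd)
  have hm : m = X - C c := by
    have h := BH.monic_eq_pow hmmonic hmroots
    rwa [hmdeg, pow_one] at h
  have hMc : M = algebraMap ℂ _ c := by
    have h0 := minpoly.aeval ℂ M
    rw [← hmdef, hm, map_sub, aeval_X, aeval_C] at h0
    exact sub_eq_zero.mp h0
  have hfc : f = algebraMap ℂ (Module.End ℂ (MonoidAlgebra ℂ G)) c := by
    apply E.injective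
    rw [← hM, hMc, AlgEquiv.commutes]
  have hv1 : v = c • (1 : MonoidAlgebra ℂ G) := by
    have h := congrArg (fun T : Module.End ℂ (MonoidAlgebra ℂ G) => T 1) hfc
    simpa [hf, LinearMap.mulLeft_apply, Module.algebraMap_end_apply] using h
  rw [hv1]
  show (c • (1 : MonoidAlgebra ℂ G)).coeff g = 0
  rw [MonoidAlgebra.coeff_smul_apply]
  have : (1 : MonoidAlgebra ℂ G).coeff g = 0 := by
    rw [MonoidAlgebra.one_def]
    exact Finsupp.single_eq_of_ne hg
  rw [this, smul_zero]


/-- Transfer of a MonoidAlgebra along a coefficient ring hom. -/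
def BH.mapCoeff {R S : Type*} [CommRing R] [CommRing S] (G : Type*) [Group G]
    (ψ : R →+* S) : MonoidAlgebra R G →+* MonoidAlgebra S G :=
  MonoidAlgebra.liftNCRingHom (MonoidAlgebra.singleOneRingHom.comp ψ)
    (MonoidAlgebra.of S G)
    (fun r g => by
      simp only [MonoidAlgebra.singleOneRingHom, RingHom.comp_apply, MonoidAlgebra.of_apply,
        RingHom.coe_mk, MonoidHom.coe_mk]
      show Commute (MonoidAlgebra.single 1 (ψ r)) (MonoidAlgebra.single g 1)
      unfold Commute SemiconjBy
      rw [MonoidAlgebra.single_mul_single, MonoidAlgebra.single_mul_single]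
      simp)

lemma BH.mapCoeff_apply {R S : Type*} [CommRing R] [CommRing S] {G : Type*} [Group G]
    [DecidableEq G] (ψ : R →+* S) (u : MonoidAlgebra R G) (h : G) :
    (BH.mapCoeff G ψ u).coeff h = ψ (u.coeff h) := by
  induction u using MonoidAlgebra.induction_linear with
  | zero => simp
  | add f g hf hg =>
      have : BH.mapCoeff G ψ (f + g) = BH.mapCoeff G ψ f + BH.mapCoeff G ψ g := map_add _ _ _
      rw [this]
      show (BH.mapCoeff G ψ f).coeff h + (BH.mapCoeff G ψ g).coeff h = _
      rw [hf, hg]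
      show _ = ψ (f.coeff h + g.coeff h)
      rw [map_add]
  | single a b =>
      show (BH.mapCoeff G ψ (MonoidAlgebra.single a b)).coeff h = ψ ((Finsupp.single a b) h)
      rw [show BH.mapCoeff G ψ (MonoidAlgebra.single a b)
          = MonoidAlgebra.single a (ψ b) from ?_]
      · rw [MonoidAlgebra.coeff_single, Finsupp.single_apply, Finsupp.single_apply]
        split <;> simp
      · unfold BH.mapCoeff
        rw [MonoidAlgebra.liftNCRingHom]
        show MonoidAlgebra.liftNC _ _ (MonoidAlgebra.single a b) = _
        rw [MonoidAlgebra.liftNC_single]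
        show MonoidAlgebra.single 1 (ψ b) * MonoidAlgebra.single a 1 = _
        rw [MonoidAlgebra.single_mul_single]
        simp


lemma BH.all_norm_eq_one {K : Type*} [Field K] [NumberField K] {x : 𝓞 K} (hx : x ≠ 0)
    (hle : ∀ φ : K →+* ℂ, ‖φ (algebraMap (𝓞 K) K x)‖ ≤ 1) :
    ∀ φ : K →+* ℂ, ‖φ (algebraMap (𝓞 K) K x)‖ = 1 := by
  classical
  intro φ₀
  have hN : (1:ℚ) ≤ |(Algebra.norm ℚ (algebraMap (𝓞 K) K x) : ℚ)| := by
    have h1 : ((Algebra.norm ℤ x : ℤ) : ℚ) = Algebra.norm ℚ (algebraMap (𝓞 K) K x) :=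
      Algebra.coe_norm_int x
    have h2 : Algebra.norm ℤ x ≠ 0 := by
      rw [Algebra.norm_ne_zero_iff]
      exact hx
    rw [← h1]
    have := Int.one_le_abs h2
    exact_mod_cast this
  have hprod : (algebraMap ℚ ℂ) (Algebra.norm ℚ (algebraMap (𝓞 K) K x))
      = ∏ σ : K →ₐ[ℚ] ℂ, σ (algebraMap (𝓞 K) K x) :=
    Algebra.norm_eq_prod_embeddings ℚ ℂ _
  have hnorm : (|(Algebra.norm ℚ (algebraMap (𝓞 K) K x) : ℚ)| : ℝ)
      = ∏ σ : K →ₐ[ℚ] ℂ, ‖σ (algebraMap (𝓞 K) K x)‖ := by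
    rw [← norm_prod, ← hprod, norm_algebraMap']
    rw [← Real.norm_eq_abs, Rat.norm_cast_real]
  set σ₀ := RingHom.equivRatAlgHom K ℂ φ₀ with hσ₀
  have hσ₀x : ∀ σ : K →ₐ[ℚ] ℂ, σ (algebraMap (𝓞 K) K x)
      = ((RingHom.equivRatAlgHom K ℂ).symm σ) (algebraMap (𝓞 K) K x) := fun σ => rfl
  have hle' : ∀ σ : K →ₐ[ℚ] ℂ, ‖σ (algebraMap (𝓞 K) K x)‖ ≤ 1 := by
    intro σ
    rw [hσ₀x σ]
    exact hle _
  have hsplit : ∏ σ : K →ₐ[ℚ] ℂ, ‖σ (algebraMap (𝓞 K) K x)‖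
      = ‖σ₀ (algebraMap (𝓞 K) K x)‖ *
        ∏ σ ∈ Finset.univ.erase σ₀, ‖σ (algebraMap (𝓞 K) K x)‖ :=
    (Finset.mul_prod_erase Finset.univ _ (Finset.mem_univ σ₀)).symm
  have hrest : ∏ σ ∈ Finset.univ.erase σ₀, ‖σ (algebraMap (𝓞 K) K x)‖ ≤ 1 :=
    Finset.prod_le_one (fun σ _ => norm_nonneg _) (fun σ _ => hle' σ)
  have hrest0 : (0:ℝ) ≤ ∏ σ ∈ Finset.univ.erase σ₀, ‖σ (algebraMap (𝓞 K) K x)‖ :=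
    Finset.prod_nonneg (fun σ _ => norm_nonneg _)
  have h1le : (1:ℝ) ≤ ‖σ₀ (algebraMap (𝓞 K) K x)‖ := by
    have hcast : (1:ℝ) ≤ (|(Algebra.norm ℚ (algebraMap (𝓞 K) K x) : ℚ)| : ℝ) := by
      exact_mod_cast hN
    rw [hnorm, hsplit] at hcast
    nlinarith [norm_nonneg (σ₀ (algebraMap (𝓞 K) K x))]
  have heq : σ₀ (algebraMap (𝓞 K) K x) = φ₀ (algebraMap (𝓞 K) K x) := by
    rfl
  rw [heq] at h1le
  exact le_antisymm (hle φ₀) h1le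


end BHsec

/-- The Berman–Higman theorem for coefficients in a ring of algebraic integers:
if `O` is the ring of integers of a number field `K`, `G` a finite group and
`u ∈ OG` a normalized (augmentation one) torsion unit of order `n ≠ 1`, then the
coefficient of `u` at the identity element is `0`. -/
theorem berman_higman_ring_of_integers {K : Type*} [Field K] [NumberField K]
    {G : Type*} [Group G] [Fintype G]
    (u : MonoidAlgebra (NumberField.RingOfIntegers K) G) (hu : IsUnit u)
    (haug : ∑ g : G, u.coeff g = 1)
    (n : ℕ) (hn0 : n ≠ 0) (hn1 : n ≠ 1) (hord : orderOf u = n) :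
    u.coeff 1 = 0 := by
  classical
  by_contra h1
  have hun : u ^ n = 1 := by rw [← hord]; exact pow_orderOf_eq_one u
  -- map along each embedding
  have hkey : ∀ φ : K →+* ℂ,
      (‖φ (algebraMap (𝓞 K) K (u.coeff 1))‖ ≤ 1 ∧
       (‖φ (algebraMap (𝓞 K) K (u.coeff 1))‖ = 1 → ∀ g : G, g ≠ 1 →
         φ (algebraMap (𝓞 K) K (u.coeff g)) = 0)) := by
    intro φ
    set ψ : 𝓞 K →+* ℂ := φ.comp (algebraMap (𝓞 K) K) with hψ
    set v : MonoidAlgebra ℂ G := BH.mapCoeff G ψ u with hv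
    have hvn : v ^ n = 1 := by rw [hv, ← map_pow, hun, map_one]
    have hv1 : v.coeff 1 = φ (algebraMap (𝓞 K) K (u.coeff 1)) := BH.mapCoeff_apply ψ u 1
    obtain ⟨hb, hr⟩ := BH.keyA v hn0 hvn
    rw [hv1] at hb hr
    exact ⟨hb, fun he g hg => by
      have := hr he g hg
      rw [BH.mapCoeff_apply] at this
      exact this⟩
  have hle : ∀ φ : K →+* ℂ, ‖φ (algebraMap (𝓞 K) K (u.coeff 1))‖ ≤ 1 := fun φ => (hkey φ).1
  have hall : ∀ φ : K →+* ℂ, ‖φ (algebraMap (𝓞 K) K (u.coeff 1))‖ = 1 :=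
    BH.all_norm_eq_one h1 hle
  -- pick an embedding
  have : Nonempty (K →+* ℂ) := ⟨(IsAlgClosed.lift (R := ℚ) (S := K) (M := ℂ)).toRingHom⟩
  obtain ⟨φ₀⟩ := this
  have hzero : ∀ g : G, g ≠ 1 → u.coeff g = 0 := by
    intro g hg
    have h0 := (hkey φ₀).2 (hall φ₀) g hg
    have hinj : Function.Injective (φ₀.comp (algebraMap (𝓞 K) K)) :=
      φ₀.injective.comp (NumberField.RingOfIntegers.coe_injective)
    have : (φ₀.comp (algebraMap (𝓞 K) K)) (u.coeff g) = (φ₀.comp (algebraMap (𝓞 K) K)) 0 := by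
      simpa using h0
    exact hinj this
  have hu1 : u.coeff 1 = 1 := by
    rw [← haug]
    rw [Finset.sum_eq_single 1 (fun b _ hb => hzero b hb) (fun h => absurd (Finset.mem_univ 1) h)]
  have huone : u = 1 := by
    have : u = MonoidAlgebra.single 1 1 := by
      ext g : 2
      by_cases hg : g = 1
      · subst hg
        rw [hu1]
        exact (Finsupp.single_eq_same).symm
      · rw [hzero g hg]
        exact (Finsupp.single_eq_of_ne hg).symm
    rw [this, ← MonoidAlgebra.one_def]
  rw [huone, orderOf_one] at hord
  exact hn1 hord.symm
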